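/- Let s be a prime power and let ℓ ≥ 2 and κ̃ be positive integers with κ̃ ≤ s·(s^{ℓ−1} − 1)/(s − 1). Then there exists an array A with s^ℓ runs, (s^ℓ − 1)/(s − 1) + κ̃ factors and s levels (entries in {1,...,s}) such that: (0) A is an orthogonal array of strength one; (1a) the subarray formed by the first (s^ℓ − 1)/(s − 1) columns of A is an orthogonal array of strength two; (1b) the subarray formed by the last κ̃ columns of A is an orthogonal array of strength two; (2) Tol₂(A) = s^{ℓ−2}; and (3) for every real p ∈ [1,∞), Unb_{p,2}(A) = κ̃·s²·(s − 1)·s^{(ℓ−2)p}. -/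

import Mathlib

open Finset

noncomputable section

instance {t k : ℕ} : DecidablePred (StrictMono : (Fin t → Fin k) → Prop) := fun f =>
  decidable_of_iff (∀ a b : Fin t, a < b → f a < f b) Iff.rfl

/-- The number of rows of the array `A` whose restriction to the columns
`j 0, …, j (t-1)` equals the tuple `x`. -/
def rowCount {S : Type*} [DecidableEq S] {N k t : ℕ} (A : Fin N → Fin k → S)
    (x : Fin t → S) (j : Fin t → Fin k) : ℕ :=
  (Finset.univ.filter fun i : Fin N => ∀ r, A i (j r) = x r).card

/-- `A` is an orthogonal array with `s` levels and strength `t`. -/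
def IsOA {S : Type*} [DecidableEq S] (s t : ℕ) {N k : ℕ} (A : Fin N → Fin k → S) : Prop :=
  ∀ (x : Fin t → S) (j : Fin t → Fin k), StrictMono j →
    (rowCount A x j : ℝ) = (N : ℝ) / (s : ℝ) ^ t

/-- The `p`-unbalance of strength `t` of `A` (with `s` levels). -/
def Unb {S : Type*} [Fintype S] [DecidableEq S] (s : ℕ) (p : ℝ) (t : ℕ) {N k : ℕ}
    (A : Fin N → Fin k → S) : ℝ :=
  ∑ x : Fin t → S, ∑ j ∈ Finset.univ.filter (fun j : Fin t → Fin k => StrictMono j),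
    |(rowCount A x j : ℝ) - (N : ℝ) / (s : ℝ) ^ t| ^ p

/-- The tolerance of strength `t` of `A` (with `s` levels). -/
def Tol {S : Type*} [DecidableEq S] (s t : ℕ) {N k : ℕ} (A : Fin N → Fin k → S) : ℝ :=
  ⨆ (x : Fin t → S) (j : {j : Fin t → Fin k // StrictMono j}),
    |(rowCount A x j.1 : ℝ) - (N : ℝ) / (s : ℝ) ^ t|

/-- The Hamming similarity between the rows `r` and `r'` of `A`. -/
def Ham {S : Type*} [DecidableEq S] {N k : ℕ} (A : Fin N → Fin k → S) (r r' : Fin N) : ℕ :=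
  (Finset.univ.filter fun j : Fin k => A r j = A r' j).card

/-- The matrix `X(A,f)`. -/
def Xmat {S : Type*} {N k : ℕ} (f : S → ℝ) (A : Fin N → Fin k → S) :
    Matrix (Fin N) (Fin k) ℝ :=
  Matrix.of fun i j => f (A i j) / Real.sqrt (∑ i' : Fin N, f (A i' j) ^ 2)

/-- The absolute deviation of `f` with respect to the uniform measure. -/
def sigma1 {S : Type*} [Fintype S] (s : ℕ) (f : S → ℝ) : ℝ :=
  ⨅ α : ℝ, (∑ x : S, |f x - α|) / s

/-- The typical deviation of `f` with respect to the uniform measure. -/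
def sigma2 {S : Type*} [Fintype S] (s : ℕ) (f : S → ℝ) : ℝ :=
  ⨅ α : ℝ, Real.sqrt ((∑ x : S, |f x - α| ^ 2) / s)
end

section AK18aux
set_option linter.unusedSectionVars false
open Finset Function
namespace AK18

variable {F : Type*} [Field F] [Fintype F] [DecidableEq F]

/-! ### Root counting for `x² + bx = e` -/

def rootSet (b e : F) : Finset F := univ.filter fun x => x * x + b * x = e

lemma rootSet_subset {b e x0 : F} (h : x0 ∈ rootSet b e) :
    rootSet b e ⊆ {x0, -b - x0} := by
  simp only [rootSet, mem_filter, mem_univ, true_and] at h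
  intro x hx
  simp only [rootSet, mem_filter, mem_univ, true_and] at hx
  have h2 : (x - x0) * (x + x0 + b) = 0 := by linear_combination hx - h
  rcases mul_eq_zero.1 h2 with h3 | h3
  · simp [sub_eq_zero.1 h3]
  · simp only [mem_insert, mem_singleton]
    right
    linear_combination h3

lemma rootSet_card_le_two (b e : F) : (rootSet b e).card ≤ 2 := by
  rcases (rootSet b e).eq_empty_or_nonempty with h | ⟨x0, hx0⟩
  · simp [h]
  · refine (card_le_card (rootSet_subset hx0)).trans ?_
    exact (card_insert_le _ _).trans (by simp)

lemma rootSet_neg (x : F) : rootSet (-(x + x)) (-(x * x)) = {x} := by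
  ext x'
  simp only [rootSet, mem_filter, mem_univ, true_and, mem_singleton]
  constructor
  · intro h
    have h2 : (x' - x) * (x' - x) = 0 := by linear_combination h
    exact sub_eq_zero.1 (mul_self_eq_zero.1 h2)
  · rintro rfl; ring

def f1 (b : F) : ℕ := (univ.filter fun e : F => (rootSet b e).card = 1).card

lemma f1_compl (b : F) :
    (univ.filter fun e : F => ¬((rootSet b e).card = 1)).card = Fintype.card F - f1 b := by
  have := Finset.card_filter_add_card_filter_not
    (s := (univ : Finset F)) (p := fun e => (rootSet b e).card = 1)
  rw [card_univ] at this
  unfold f1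
  omega

lemma f1_le (b : F) : f1 b ≤ Fintype.card F := by
  rw [← card_univ]; exact card_le_card (filter_subset _ _)

lemma sum_f1 : ∑ b : F, f1 b = Fintype.card F := by
  classical
  have hinj : Injective (fun x : F => ((-(x + x), -(x * x)) : F × F)) := by
    intro x x' h
    simp only [Prod.mk.injEq] at h
    obtain ⟨h1, h2⟩ := h
    have hx' : x' ∈ rootSet (-(x + x)) (-(x * x)) := by
      simp only [rootSet, mem_filter, mem_univ, true_and]
      linear_combination x' * h1 - h2
    rw [rootSet_neg] at hx'
    exact (mem_singleton.1 hx').symm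
  have himg : (univ.filter fun z : F × F => (rootSet z.1 z.2).card = 1)
      = univ.image (fun x : F => ((-(x + x), -(x * x)) : F × F)) := by
    ext z
    obtain ⟨b, e⟩ := z
    simp only [mem_filter, mem_univ, true_and, mem_image]
    constructor
    · intro hz
      obtain ⟨x, hx⟩ := Finset.card_eq_one.1 hz
      have hxmem : x ∈ rootSet b e := by rw [hx]; exact mem_singleton_self x
      simp only [rootSet, mem_filter, mem_univ, true_and] at hxmem
      have hother : (-b - x) ∈ rootSet b e := by
        simp only [rootSet, mem_filter, mem_univ, true_and]
        linear_combination hxmem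
      rw [hx, mem_singleton] at hother
      have hb : b = -(x + x) := by linear_combination - hother
      have he : e = -(x * x) := by linear_combination - hxmem + x * hb
      exact ⟨x, by rw [← hb, ← he]⟩
    · rintro ⟨x, hx⟩
      simp only [Prod.mk.injEq] at hx
      rw [← hx.1, ← hx.2, rootSet_neg, card_singleton]
  have hcard : (univ.filter fun z : F × F => (rootSet z.1 z.2).card = 1).card
      = Fintype.card F := by
    rw [himg, Finset.card_image_of_injective _ hinj, card_univ]
  have hfib : (univ.filter fun z : F × F => (rootSet z.1 z.2).card = 1).card
      = ∑ b : F, f1 b := by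
    rw [Finset.card_eq_sum_card_fiberwise (f := Prod.fst) (t := univ) (fun z _ => mem_univ _)]
    refine Finset.sum_congr rfl fun b _ => ?_
    unfold f1
    refine Finset.card_bij' (fun z _ => z.2) (fun e _ => (b, e)) ?_ ?_ ?_ ?_
    · intro z hz
      simp only [mem_filter, mem_univ, true_and] at hz ⊢
      rw [← hz.2]; exact hz.1
    · intro e he
      simp only [mem_filter, mem_univ, true_and] at he ⊢
      simpa using he
    · intro z hz
      simp only [mem_filter, mem_univ, true_and] at hz
      exact Prod.ext hz.2.symm rfl
    · intro e he; rfl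
  omega


/-! ### Linear functionals on `F × F^d` -/

variable {d : ℕ}

def linW (a : F) (β : Fin d → F) : (F × (Fin d → F)) →ₗ[F] F where
  toFun w := a * w.1 + dotProduct β w.2
  map_add' w w' := by
    simp only [Prod.fst_add, Prod.snd_add, dotProduct_add]
    ring
  map_smul' c w := by
    simp only [Prod.smul_fst, Prod.smul_snd, dotProduct_smul, smul_eq_mul,
      RingHom.id_apply]
    ring

@[simp] lemma linW_apply (a : F) (β : Fin d → F) (w : F × (Fin d → F)) :
    linW a β w = a * w.1 + dotProduct β w.2 := rfl

def quadW (γ : F) (μ : Fin d → F) (w : F × (Fin d → F)) : F :=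
  w.1 * w.1 + γ * w.1 + dotProduct μ w.2

lemma linW_param_eq {a a' : F} {β β' : Fin d → F}
    (h : (linW a β : (F × (Fin d → F)) →ₗ[F] F) = linW a' β') : a = a' ∧ β = β' := by
  constructor
  · have := LinearMap.congr_fun h (1, 0)
    simpa using this
  · funext i
    have := LinearMap.congr_fun h (0, Pi.single i 1)
    simpa [dotProduct_single] using this

lemma smul_linW (c a : F) (β : Fin d → F) :
    c • (linW a β : (F × (Fin d → F)) →ₗ[F] F) = linW (c * a) (c • β) := by
  apply LinearMap.ext; intro w
  simp only [LinearMap.smul_apply, linW_apply, smul_eq_mul, smul_dotProduct]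
  ring

lemma linW_surjective {a : F} {β : Fin d → F} (h : ¬(a = 0 ∧ β = 0)) :
    Surjective (linW a β) := by
  intro c
  by_cases ha : a = 0
  · have hβ : β ≠ 0 := fun h0 => h ⟨ha, h0⟩
    obtain ⟨i, hi⟩ : ∃ i, β i ≠ 0 := by
      by_contra hall; push_neg at hall; exact hβ (funext hall)
    refine ⟨(0, Pi.single i ((β i)⁻¹ * c)), ?_⟩
    simp only [linW_apply, ha, zero_mul, dotProduct_single, zero_add]
    field_simp
  · refine ⟨(a⁻¹ * c, 0), ?_⟩
    simp only [linW_apply, dotProduct_zero, add_zero]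
    field_simp

/-! ### Fiber counting for surjective linear maps -/

lemma fiber_card {M T : Type*} [AddCommGroup M] [AddCommGroup T] [Module F M] [Module F T]
    [Fintype M] [DecidableEq M] [Fintype T] [DecidableEq T]
    (Φ : M →ₗ[F] T) (hΦ : Surjective Φ) (t : T) :
    (univ.filter fun w => Φ w = t).card * Fintype.card T = Fintype.card M := by
  have key : ∀ t' : T, (univ.filter fun w => Φ w = t').card
      = (univ.filter fun w => Φ w = t).card := by
    intro t'
    obtain ⟨u, hu⟩ := hΦ (t' - t)
    refine Finset.card_bij' (fun w _ => w - u) (fun w _ => w + u) ?_ ?_ ?_ ?_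
    · intro w hw
      simp only [mem_filter, mem_univ, true_and] at hw ⊢
      rw [map_sub, hw, hu]; abel
    · intro w hw
      simp only [mem_filter, mem_univ, true_and] at hw ⊢
      rw [map_add, hw, hu]; abel
    · intro w _; simp
    · intro w _; simp
  have htot : Fintype.card M = ∑ t' : T, (univ.filter fun w => Φ w = t').card := by
    rw [← card_univ (α := M)]
    exact Finset.card_eq_sum_card_fiberwise (f := fun w => Φ w) (t := univ)
      (fun w _ => mem_univ _)
  calc (univ.filter fun w => Φ w = t).card * Fintype.card T
      = ∑ t' : T, (univ.filter fun w => Φ w = t').card := by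
        rw [Finset.sum_congr rfl fun t' _ => key t', sum_const, card_univ, smul_eq_mul,
          mul_comm]
    _ = Fintype.card M := htot.symm

lemma card_W : Fintype.card (F × (Fin d → F)) = Fintype.card F ^ (d + 1) := by
  rw [Fintype.card_prod, Fintype.card_fun, Fintype.card_fin, mul_comm, ← pow_succ]

lemma fiber_const {T : Type*} [AddCommGroup T] [Module F T] [Fintype T] [DecidableEq T]
    (Φ : (F × (Fin d → F)) →ₗ[F] T) (hΦ : Surjective Φ) {e : ℕ}
    (hT : Fintype.card T = Fintype.card F ^ e) (he : e ≤ d + 1) (z : T) :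
    (univ.filter fun w => Φ w = z).card = Fintype.card F ^ (d + 1 - e) := by
  have h := fiber_card Φ hΦ z
  rw [card_W, hT] at h
  have hq : 0 < Fintype.card F := Fintype.card_pos
  refine Nat.eq_of_mul_eq_mul_right (pow_pos hq e) ?_
  rw [h, ← pow_add]
  congr 1
  omega

/-! ### Surjectivity of product maps -/

lemma surjective_prod_of_ker {M T S : Type*} [AddCommGroup M] [AddCommGroup T] [AddCommGroup S]
    [Module F M] [Module F T] [Module F S]
    (φ : M →ₗ[F] T) (ψ : M →ₗ[F] S) (hφ : Surjective φ)
    (hker : ∀ s0 : S, ∃ u, φ u = 0 ∧ ψ u = s0) :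
    Surjective ⇑(ψ.prod φ) := by
  rintro ⟨s0, t0⟩
  obtain ⟨v, hv⟩ := hφ t0
  obtain ⟨u, hu0, hu⟩ := hker (s0 - ψ v)
  refine ⟨v + u, ?_⟩
  have h1 : ψ (v + u) = s0 := by rw [map_add, hu]; abel
  have h2 : φ (v + u) = t0 := by rw [map_add, hv, hu0, add_zero]
  show (ψ (v + u), φ (v + u)) = (s0, t0)
  rw [h1, h2]

lemma surjective_pair {M : Type*} [AddCommGroup M] [Module F M]
    (φ ψ : M →ₗ[F] F) (hφ : Surjective φ) (hne : ∀ c : F, ψ ≠ c • φ) :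
    Surjective ⇑(ψ.prod φ) := by
  by_cases hk : ∃ u, φ u = 0 ∧ ψ u ≠ 0
  · obtain ⟨u, hu0, hu⟩ := hk
    refine surjective_prod_of_ker φ ψ hφ fun s0 => ⟨(s0 * (ψ u)⁻¹) • u, ?_, ?_⟩
    · simp [hu0]
    · simp only [map_smul, smul_eq_mul]
      field_simp
  · push_neg at hk
    obtain ⟨v, hv⟩ := hφ 1
    exfalso
    apply hne (ψ v)
    apply LinearMap.ext; intro w
    have h0 : φ (w - (φ w) • v) = 0 := by
      simp [map_sub, map_smul, hv]
    have h1 := hk _ h0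
    simp only [map_sub, map_smul, smul_eq_mul, sub_eq_zero] at h1
    simp only [LinearMap.smul_apply, smul_eq_mul]
    rw [h1]; ring

/-! ### Counting through a fiber-constant map -/

lemma count_comp {M T : Type*} [Fintype M] [DecidableEq M] [Fintype T] [DecidableEq T]
    (Φ : M → T) (K : ℕ) (hK : ∀ t, (univ.filter fun w => Φ w = t).card = K)
    (P : T → Prop) [DecidablePred P] :
    (univ.filter fun w => P (Φ w)).card = K * (univ.filter P).card := by
  rw [Finset.card_eq_sum_card_fiberwise (f := Φ) (t := univ.filter P)
    (fun w hw => by simp only [Finset.mem_coe, mem_filter, mem_univ, true_and] at hw ⊢; exact hw)]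
  rw [Finset.sum_congr rfl (fun t ht => ?_), Finset.sum_const, smul_eq_mul, mul_comm]
  rw [← hK t]
  congr 1
  ext w
  simp only [mem_filter, mem_univ, true_and]
  constructor
  · exact And.right
  · intro h
    exact ⟨h ▸ (mem_filter.1 ht).2, h⟩

lemma count_comp' {M T : Type*} [Fintype M] [DecidableEq M] [Fintype T] [DecidableEq T]
    (Φ : M → T) (K : ℕ) (hK : ∀ t, (univ.filter fun w => Φ w = t).card = K)
    (P : T → Prop) [DecidablePred P] {Q : M → Prop} [DecidablePred Q]
    (hQ : ∀ w, Q w ↔ P (Φ w)) :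
    (univ.filter Q).card = K * (univ.filter P).card := by
  rw [Finset.filter_congr (fun w _ => hQ w)]
  exact count_comp Φ K hK P

/-! ### The standard product maps -/

lemma Φμ_surj {μ : Fin d → F} (hμ : μ ≠ 0) :
    Surjective ⇑((linW (1:F) (0 : Fin d → F)).prod (linW 0 μ)) :=
  surjective_prod_of_ker _ _ (linW_surjective (by simp [hμ]))
    (fun s0 => ⟨(s0, 0), by simp, by simp⟩)

lemma Φ3_surj {β μ : Fin d → F} (hne : ∀ c : F, β ≠ c • μ) (hμ : μ ≠ 0) :
    Surjective ⇑((linW (1:F) (0 : Fin d → F)).prod ((linW 0 β).prod (linW 0 μ))) := by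
  have hinner : Surjective ⇑((linW (0:F) β).prod (linW 0 μ)) := by
    refine surjective_pair _ _ (linW_surjective (by simp [hμ])) ?_
    intro c h
    rw [smul_linW] at h
    obtain ⟨-, h2⟩ := linW_param_eq h
    exact hne c h2
  exact surjective_prod_of_ker _ _ hinner
    (fun s0 => ⟨(s0, 0), by simp [LinearMap.prod_apply, Function.prod, Prod.ext_iff], by simp⟩)

lemma dim_ge_two {β μ : Fin d → F} (hne : ∀ c : F, β ≠ c • μ) (hμ : μ ≠ 0) : 2 ≤ d := by
  by_contra h
  push_neg at h
  interval_cases d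
  · exact hμ (funext fun i => i.elim0)
  · have hμ0 : μ 0 ≠ 0 := by
      intro h0
      apply hμ
      funext i
      rw [Subsingleton.elim i 0]
      simpa using h0
    apply hne (β 0 * (μ 0)⁻¹)
    funext i
    rw [Subsingleton.elim i 0]
    simp only [Pi.smul_apply, smul_eq_mul]
    field_simp

/-! ### helpers for counting solution sets -/

lemma card_filter_eq_one {α : Type*} [Fintype α] [DecidableEq α] {P : α → Prop}
    [DecidablePred P] (a : α) (h : ∀ x, P x ↔ x = a) : (univ.filter P).card = 1 := by
  rw [show univ.filter P = {a} by ext x; simp [h x]]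
  exact card_singleton a

lemma card_filter_eq_card {α : Type*} [Fintype α] [DecidableEq α] {P : α → Prop}
    [DecidablePred P] (g : F → α) (hg : ∀ x, P x ↔ ∃ c : F, x = g c) (hinj : Injective g) :
    (univ.filter P).card = Fintype.card F := by
  have himg : univ.filter P = univ.image g := by
    ext x
    simp only [mem_filter, mem_univ, true_and, mem_image]
    rw [hg x]
    constructor
    · rintro ⟨c, rfl⟩; exact ⟨c, rfl⟩
    · rintro ⟨c, rfl⟩; exact ⟨c, rfl⟩
  rw [himg, Finset.card_image_of_injective _ hinj, card_univ]

/-! ### Pair counts -/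

lemma cnt_LL (hd : 1 ≤ d) {a a' : F} {β β' : Fin d → F}
    (h0' : ¬(a' = 0 ∧ β' = 0))
    (hne : ∀ c : F, ¬(a = c * a' ∧ β = c • β')) (c1 c2 : F) :
    (univ.filter fun w : F × (Fin d → F) => linW a β w = c1 ∧ linW a' β' w = c2).card
      = Fintype.card F ^ (d - 1) := by
  have hsurj : Surjective ⇑((linW a β).prod (linW a' β')) := by
    refine surjective_pair _ _ (linW_surjective h0') ?_
    intro c h
    rw [smul_linW] at h
    obtain ⟨h1, h2⟩ := linW_param_eq h
    exact hne c ⟨h1, h2⟩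
  have hfib := fiber_const _ hsurj (by rw [Fintype.card_prod]; ring) (by omega : 2 ≤ d + 1) (c1, c2)
  rw [show (univ.filter fun w : F × (Fin d → F) => linW a β w = c1 ∧ linW a' β' w = c2)
      = univ.filter (fun w => ((linW a β).prod (linW a' β')) w = (c1, c2)) from by
    refine Finset.filter_congr fun w _ => ?_; simp [LinearMap.prod_apply, Function.prod, Prod.ext_iff]]
  rw [hfib]
  congr 1 <;> omega

lemma cnt_L0Q (hd : 1 ≤ d) {a γ : F} {μ : Fin d → F} (ha : a ≠ 0) (hμ : μ ≠ 0) (c1 c2 : F) :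
    (univ.filter fun w : F × (Fin d → F) => linW a 0 w = c1 ∧ quadW γ μ w = c2).card
      = Fintype.card F ^ (d - 1) := by
  have hfib := fiber_const ((linW (1:F) (0 : Fin d → F)).prod (linW 0 μ)) (Φμ_surj hμ)
    (by rw [Fintype.card_prod]; ring) (by omega : 2 ≤ d + 1)
  rw [count_comp' (⇑((linW (1:F) (0 : Fin d → F)).prod (linW 0 μ))) _ hfib
    (fun z : F × F => a * z.1 = c1 ∧ z.1 * z.1 + γ * z.1 + z.2 = c2)
    (fun w => by simp [quadW, LinearMap.prod_apply, Function.prod])]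
  rw [card_filter_eq_one ((a⁻¹ * c1, c2 - (a⁻¹ * c1) * (a⁻¹ * c1) - γ * (a⁻¹ * c1)) : F × F)
    ?_, mul_one]
  · congr 1 <;> omega
  · intro z
    constructor
    · rintro ⟨h1, h2⟩
      have hz1 : z.1 = a⁻¹ * c1 := by
        field_simp
        linear_combination h1
      refine Prod.ext hz1 ?_
      rw [← hz1]
      linear_combination h2
    · rintro rfl
      constructor
      · field_simp
      · ring

lemma cnt_LQ_indep {a γ : F} {β μ : Fin d → F} (hne : ∀ c : F, β ≠ c • μ) (hμ : μ ≠ 0)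
    (c1 c2 : F) :
    (univ.filter fun w : F × (Fin d → F) => linW a β w = c1 ∧ quadW γ μ w = c2).card
      = Fintype.card F ^ (d - 1) := by
  have hd2 : 2 ≤ d := dim_ge_two hne hμ
  have hfib := fiber_const ((linW (1:F) (0 : Fin d → F)).prod ((linW 0 β).prod (linW 0 μ)))
    (Φ3_surj hne hμ) (by rw [Fintype.card_prod, Fintype.card_prod]; ring) (by omega : 3 ≤ d + 1)
  rw [count_comp' (⇑((linW (1:F) (0 : Fin d → F)).prod ((linW 0 β).prod (linW 0 μ)))) _ hfib
    (fun z : F × F × F => a * z.1 + z.2.1 = c1 ∧ z.1 * z.1 + γ * z.1 + z.2.2 = c2)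
    (fun w => by simp [quadW, LinearMap.prod_apply, Function.prod])]
  rw [card_filter_eq_card (fun x : F => (x, (c1 - a * x, c2 - x * x - γ * x))) ?_ ?_]
  · rw [← pow_succ]; congr 1 <;> omega
  · intro z
    constructor
    · rintro ⟨h1, h2⟩
      refine ⟨z.1, ?_⟩
      refine Prod.ext rfl (Prod.ext ?_ ?_)
      · linear_combination h1
      · linear_combination h2
    · rintro ⟨x, rfl⟩
      constructor <;> ring
  · intro x x' h
    exact congrArg Prod.fst h

lemma cnt_LQ_prop (hd : 1 ≤ d) {a γ c : F} {μ : Fin d → F} (hc : c ≠ 0) (hμ : μ ≠ 0)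
    (c1 c2 : F) :
    (univ.filter fun w : F × (Fin d → F) => linW a (c • μ) w = c1 ∧ quadW γ μ w = c2).card
      = Fintype.card F ^ (d - 1) * (rootSet (γ - a * c⁻¹) (c2 - c1 * c⁻¹)).card := by
  have hfib := fiber_const ((linW (1:F) (0 : Fin d → F)).prod (linW 0 μ)) (Φμ_surj hμ)
    (by rw [Fintype.card_prod]; ring) (by omega : 2 ≤ d + 1)
  rw [count_comp' (⇑((linW (1:F) (0 : Fin d → F)).prod (linW 0 μ))) _ hfib
    (fun z : F × F => a * z.1 + c * z.2 = c1 ∧ z.1 * z.1 + γ * z.1 + z.2 = c2)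
    (fun w => by simp [quadW, LinearMap.prod_apply, Function.prod, smul_dotProduct,
      smul_eq_mul])]
  have hPcard : (univ.filter (fun z : F × F =>
      a * z.1 + c * z.2 = c1 ∧ z.1 * z.1 + γ * z.1 + z.2 = c2)).card
      = (rootSet (γ - a * c⁻¹) (c2 - c1 * c⁻¹)).card := by
    refine Finset.card_bij' (fun z _ => z.1) (fun x _ => (x, c2 - x * x - γ * x)) ?_ ?_ ?_ ?_
    · intro z hz
      simp only [mem_filter, mem_univ, true_and] at hz
      obtain ⟨h1, h2⟩ := hz
      simp only [rootSet, mem_filter, mem_univ, true_and]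
      have hcc : c⁻¹ * c = 1 := inv_mul_cancel₀ hc
      linear_combination h2 - c⁻¹ * h1 + z.2 * hcc
    · intro x hx
      simp only [rootSet, mem_filter, mem_univ, true_and] at hx
      simp only [mem_filter, mem_univ, true_and]
      have hcc : c * c⁻¹ = 1 := mul_inv_cancel₀ hc
      constructor
      · linear_combination (-c) * hx + (c1 - a * x) * hcc
      · ring
    · intro z hz
      simp only [mem_filter, mem_univ, true_and] at hz
      exact Prod.ext rfl (by linear_combination - hz.2)
    · intro x hx; rfl
  rw [hPcard]
  congr 2 <;> omega

lemma cnt_QQ_same (hd : 1 ≤ d) {γ γ' : F} {μ : Fin d → F} (hγ : γ ≠ γ') (hμ : μ ≠ 0)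
    (c1 c2 : F) :
    (univ.filter fun w : F × (Fin d → F) => quadW γ μ w = c1 ∧ quadW γ' μ w = c2).card
      = Fintype.card F ^ (d - 1) := by
  have hfib := fiber_const ((linW (1:F) (0 : Fin d → F)).prod (linW 0 μ)) (Φμ_surj hμ)
    (by rw [Fintype.card_prod]; ring) (by omega : 2 ≤ d + 1)
  rw [count_comp' (⇑((linW (1:F) (0 : Fin d → F)).prod (linW 0 μ))) _ hfib
    (fun z : F × F => z.1 * z.1 + γ * z.1 + z.2 = c1 ∧ z.1 * z.1 + γ' * z.1 + z.2 = c2)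
    (fun w => by simp [quadW, LinearMap.prod_apply, Function.prod])]
  have hgg : γ - γ' ≠ 0 := sub_ne_zero.2 hγ
  set x0 : F := (γ - γ')⁻¹ * (c1 - c2) with hx0
  rw [card_filter_eq_one ((x0, c1 - x0 * x0 - γ * x0) : F × F) ?_, mul_one]
  · congr 1 <;> omega
  · intro z
    constructor
    · rintro ⟨h1, h2⟩
      have hz1 : z.1 = x0 := by
        rw [hx0]
        field_simp
        linear_combination h1 - h2
      refine Prod.ext hz1 ?_
      rw [← hz1]
      linear_combination h1
    · rintro rfl
      constructor
      · ring
      · rw [hx0]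
        field_simp
        ring
  
lemma cnt_QQ_diff {γ γ' : F} {μ μ' : Fin d → F} (hne : ∀ c : F, μ ≠ c • μ') (hμ' : μ' ≠ 0)
    (c1 c2 : F) :
    (univ.filter fun w : F × (Fin d → F) => quadW γ μ w = c1 ∧ quadW γ' μ' w = c2).card
      = Fintype.card F ^ (d - 1) := by
  have hd2 : 2 ≤ d := dim_ge_two hne hμ'
  have hfib := fiber_const ((linW (1:F) (0 : Fin d → F)).prod ((linW 0 μ).prod (linW 0 μ')))
    (Φ3_surj hne hμ') (by rw [Fintype.card_prod, Fintype.card_prod]; ring) (by omega : 3 ≤ d + 1)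
  rw [count_comp' (⇑((linW (1:F) (0 : Fin d → F)).prod ((linW 0 μ).prod (linW 0 μ')))) _ hfib
    (fun z : F × F × F => z.1 * z.1 + γ * z.1 + z.2.1 = c1 ∧ z.1 * z.1 + γ' * z.1 + z.2.2 = c2)
    (fun w => by simp [quadW, LinearMap.prod_apply, Function.prod])]
  rw [card_filter_eq_card (fun x : F => (x, (c1 - x * x - γ * x, c2 - x * x - γ' * x))) ?_ ?_]
  · rw [← pow_succ]; congr 1 <;> omega
  · intro z
    constructor
    · rintro ⟨h1, h2⟩
      refine ⟨z.1, Prod.ext rfl (Prod.ext ?_ ?_)⟩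
      · linear_combination h1
      · linear_combination h2
    · rintro ⟨x, rfl⟩
      constructor <;> ring
  · intro x x' h
    exact congrArg Prod.fst h

/-! ### Single-column counts -/

lemma cnt1_lin {a : F} {β : Fin d → F} (h0 : ¬(a = 0 ∧ β = 0)) (c : F) :
    (univ.filter fun w : F × (Fin d → F) => linW a β w = c).card = Fintype.card F ^ d := by
  have := fiber_const (linW a β) (linW_surjective h0) (e := 1) (by simp) (by omega) c
  simpa using this

lemma cnt1_quad (hd : 1 ≤ d) {γ : F} {μ : Fin d → F} (hμ : μ ≠ 0) (c : F) :
    (univ.filter fun w : F × (Fin d → F) => quadW γ μ w = c).card = Fintype.card F ^ d := by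
  have hfib := fiber_const ((linW (1:F) (0 : Fin d → F)).prod (linW 0 μ)) (Φμ_surj hμ)
    (by rw [Fintype.card_prod]; ring) (by omega : 2 ≤ d + 1)
  rw [count_comp' (⇑((linW (1:F) (0 : Fin d → F)).prod (linW 0 μ))) _ hfib
    (fun z : F × F => z.1 * z.1 + γ * z.1 + z.2 = c)
    (fun w => by simp [quadW, LinearMap.prod_apply, Function.prod])]
  rw [card_filter_eq_card (fun x : F => ((x, c - x * x - γ * x) : F × F)) ?_ ?_]
  · rw [← pow_succ]; congr 1 <;> omega
  · intro z
    constructor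
    · intro h1
      exact ⟨z.1, Prod.ext rfl (by linear_combination h1)⟩
    · rintro ⟨x, rfl⟩
      ring
  · intro x x' h
    exact congrArg Prod.fst h


/-! ### Projectivization -/

lemma card_proj_mul {M : Type*} [AddCommGroup M] [Module F M] [Fintype M] [DecidableEq M]
    [Nontrivial M] :
    Nat.card (Projectivization F M) * (Fintype.card F - 1) = Fintype.card M - 1 := by
  classical
  haveI : Finite (Projectivization F M) := Quotient.finite _
  haveI : Fintype (Projectivization F M) := Fintype.ofFinite _
  rw [Nat.card_eq_fintype_card]
  have key : ∀ Q : Projectivization F M,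
      (univ.filter fun v : {v : M // v ≠ 0} => Projectivization.mk F v.1 v.2 = Q).card
        = Fintype.card F - 1 := by
    intro Q
    have equiv : Fˣ ≃ {v : {v : M // v ≠ 0} // Projectivization.mk F v.1 v.2 = Q} := by
      refine Equiv.ofBijective (fun u => ⟨⟨(u : F) • Q.rep,
        smul_ne_zero (Units.ne_zero u) (Projectivization.rep_nonzero Q)⟩, ?_⟩) ⟨?_, ?_⟩
      · rw [show Projectivization.mk F ((u : F) • Q.rep)
            (smul_ne_zero (Units.ne_zero u) (Projectivization.rep_nonzero Q))
            = Projectivization.mk F Q.rep (Projectivization.rep_nonzero Q) from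
          (Projectivization.mk_eq_mk_iff F _ _ _ _).2 ⟨u, by rw [Units.smul_def]⟩]
        exact Projectivization.mk_rep Q
      · intro u u' h
        simp only [Subtype.mk.injEq] at h
        exact Units.ext (smul_left_injective F (Projectivization.rep_nonzero Q) h)
      · rintro ⟨⟨v, hv⟩, hQ⟩
        have h2 : Projectivization.mk F v hv
            = Projectivization.mk F Q.rep (Projectivization.rep_nonzero Q) := by
          rw [Projectivization.mk_rep]; exact hQ
        obtain ⟨a, ha⟩ := (Projectivization.mk_eq_mk_iff F _ _ _ _).1 h2
        refine ⟨a, ?_⟩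
        apply Subtype.ext
        apply Subtype.ext
        simpa [Units.smul_def] using ha
    calc (univ.filter fun v : {v : M // v ≠ 0} => Projectivization.mk F v.1 v.2 = Q).card
        = Fintype.card {v : {v : M // v ≠ 0} // Projectivization.mk F v.1 v.2 = Q} :=
          (Fintype.card_subtype _).symm
      _ = Fintype.card Fˣ := (Fintype.card_congr equiv).symm
      _ = Fintype.card F - 1 := Fintype.card_units (α := F)
  have h1 : Fintype.card {v : M // v ≠ 0} = Fintype.card M - 1 := by
    rw [Fintype.card_subtype, Finset.filter_ne', Finset.card_erase_of_mem (mem_univ 0),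
      card_univ]
  have h2 : Fintype.card {v : M // v ≠ 0}
      = ∑ Q : Projectivization F M,
        (univ.filter fun v : {v : M // v ≠ 0} => Projectivization.mk F v.1 v.2 = Q).card := by
    rw [← card_univ]
    exact Finset.card_eq_sum_card_fiberwise (fun v _ => mem_univ _)
  rw [← h1, h2, Finset.sum_congr rfl (fun Q _ => key Q), Finset.sum_const, card_univ,
    smul_eq_mul]

lemma rep_nonprop {M : Type*} [AddCommGroup M] [Module F M] {P P' : Projectivization F M}
    (h : P ≠ P') : ∀ c : F, P'.rep ≠ c • P.rep := by
  intro c hc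
  have hc0 : c ≠ 0 := by
    rintro rfl
    exact Projectivization.rep_nonzero P' (by simpa using hc)
  apply h
  rw [← Projectivization.mk_rep P, ← Projectivization.mk_rep P',
    Projectivization.mk_eq_mk_iff]
  refine ⟨(Units.mk0 c hc0)⁻¹, ?_⟩
  rw [Units.smul_def, hc, smul_smul]
  simp [inv_mul_cancel₀ hc0]

/-! ### The embedded copies of F in the projective space of F × F^d -/

variable {d : ℕ}

noncomputable def gmapP (P : Projectivization F (Fin d → F)) (a : F) :
    Projectivization F (F × (Fin d → F)) :=
  Projectivization.mk F (a, P.rep)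
    (fun h => Projectivization.rep_nonzero P (congrArg Prod.snd h))

lemma gmapP_inj (P : Projectivization F (Fin d → F)) : Injective (gmapP P) := by
  intro a a' h
  unfold gmapP at h
  rw [Projectivization.mk_eq_mk_iff] at h
  obtain ⟨u, hu⟩ := h
  have hu1 : (u : F) * a' = a := by
    have := congrArg Prod.fst hu
    simpa [Units.smul_def, smul_eq_mul] using this
  have hu2 : (u : F) • P.rep = P.rep := by
    have := congrArg Prod.snd hu
    simpa [Units.smul_def] using this
  have h3 : (u : F) = 1 :=
    smul_left_injective F (Projectivization.rep_nonzero P)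
      (hu2.trans (one_smul F P.rep).symm)
  rw [h3, one_mul] at hu1
  exact hu1.symm

noncomputable def linP (Q : Projectivization F (F × (Fin d → F))) : (F × (Fin d → F)) → F :=
  ⇑(linW Q.rep.1 Q.rep.2)

noncomputable def quadP (z : F × Projectivization F (Fin d → F)) : (F × (Fin d → F)) → F :=
  quadW z.1 z.2.rep

lemma cross_offdiag (hd : 1 ≤ d) (γ : F) (P : Projectivization F (Fin d → F))
    (Q : Projectivization F (F × (Fin d → F))) (hQ : ∀ a, gmapP P a ≠ Q) (c1 c2 : F) :
    (univ.filter fun w => linP Q w = c1 ∧ quadP (γ, P) w = c2).card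
      = Fintype.card F ^ (d - 1) := by
  have hμ : P.rep ≠ 0 := Projectivization.rep_nonzero P
  have hQ0 : Q.rep ≠ 0 := Projectivization.rep_nonzero Q
  simp only [linP, quadP]
  by_cases hβ : ∃ c : F, Q.rep.2 = c • P.rep
  · obtain ⟨c, hc⟩ := hβ
    by_cases hc0 : c = 0
    · have hβ0 : Q.rep.2 = 0 := by rw [hc, hc0, zero_smul]
      have ha : Q.rep.1 ≠ 0 := by
        intro h; exact hQ0 (Prod.ext h hβ0)
      simp only [hβ0]
      exact cnt_L0Q hd ha hμ c1 c2
    · exfalso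
      apply hQ (Q.rep.1 * c⁻¹)
      rw [← Projectivization.mk_rep Q]
      unfold gmapP
      rw [Projectivization.mk_eq_mk_iff]
      refine ⟨(Units.mk0 c hc0)⁻¹, ?_⟩
      have hval : (c⁻¹ : F) • Q.rep = ((Q.rep.1 * c⁻¹ : F), P.rep) := by
        refine Prod.ext ?_ ?_
        · simp only [Prod.smul_fst, smul_eq_mul]
          ring
        · show c⁻¹ • Q.rep.2 = P.rep
          rw [hc, smul_smul, inv_mul_cancel₀ hc0, one_smul]
      simpa [Units.smul_def] using hval
  · push_neg at hβ
    exact cnt_LQ_indep hβ hμ c1 c2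

lemma cross_diag (hd : 1 ≤ d) (γ : F) (P : Projectivization F (Fin d → F)) (a : F) :
    ∃ u : F, u ≠ 0 ∧ ∀ c1 c2 : F,
      (univ.filter fun w => linP (gmapP P a) w = c1 ∧ quadP (γ, P) w = c2).card
        = Fintype.card F ^ (d - 1) * (rootSet (γ - a) (c2 - c1 * u⁻¹)).card := by
  have hμ : P.rep ≠ 0 := Projectivization.rep_nonzero P
  have hne0 : ((a, P.rep) : F × (Fin d → F)) ≠ 0 :=
    fun h => hμ (congrArg Prod.snd h)
  have h2 : Projectivization.mk F (gmapP P a).rep (Projectivization.rep_nonzero _)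
      = Projectivization.mk F (a, P.rep) hne0 := by
    rw [Projectivization.mk_rep]; rfl
  obtain ⟨v, hv⟩ := (Projectivization.mk_eq_mk_iff F _ _ _ _).1 h2
  refine ⟨(v : F), v.ne_zero, fun c1 c2 => ?_⟩
  have h1 : (gmapP P a).rep.1 = (v : F) * a := by
    rw [← hv]; simp [Units.smul_def, smul_eq_mul]
  have h2' : (gmapP P a).rep.2 = (v : F) • P.rep := by
    rw [← hv]; simp [Units.smul_def]
  simp only [linP, quadP, h1, h2']
  rw [cnt_LQ_prop hd v.ne_zero hμ c1 c2]
  have ha' : γ - ((v : F) * a) * (v : F)⁻¹ = γ - a := by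
    have : ((v : F) * a) * (v : F)⁻¹ = a := by
      field_simp
    rw [this]
  rw [ha']

/-! ### Summing the deviations over the cells of one pair -/

lemma sum_dev_rootSet (b : F) {X : ℝ} (hX : 0 ≤ X) {p : ℝ} (hp : 1 ≤ p) :
    ∑ e : F, |X * ((rootSet b e).card : ℝ) - X| ^ p
      = ((Fintype.card F - f1 b : ℕ) : ℝ) * X ^ p := by
  classical
  have hp0 : p ≠ 0 := by linarith
  rw [← Finset.sum_filter_add_sum_filter_not univ (fun e => (rootSet b e).card = 1)]
  have hA : ∑ e ∈ univ.filter (fun e => (rootSet b e).card = 1),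
      |X * ((rootSet b e).card : ℝ) - X| ^ p = 0 := by
    apply Finset.sum_eq_zero
    intro e he
    rw [mem_filter] at he
    rw [he.2]
    simp [Real.zero_rpow hp0]
  have hterm : ∀ e ∈ univ.filter (fun e => ¬((rootSet b e).card = 1)),
      |X * ((rootSet b e).card : ℝ) - X| ^ p = X ^ p := by
    intro e he
    rw [mem_filter] at he
    have hle := rootSet_card_le_two b e
    have hcase : (rootSet b e).card = 0 ∨ (rootSet b e).card = 2 := by omega
    rcases hcase with h | h <;> rw [h]
    · rw [Nat.cast_zero, mul_zero, zero_sub, abs_neg, abs_of_nonneg hX]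
    · rw [show X * ((2 : ℕ) : ℝ) - X = X by push_cast; ring, abs_of_nonneg hX]
  rw [hA, zero_add, Finset.sum_congr rfl hterm, Finset.sum_const, f1_compl, nsmul_eq_mul]


/-! ### The per-column sum -/

lemma percol_sum (hd : 1 ≤ d) [Fintype (Projectivization F (F × (Fin d → F)))]
    (γ : F) (P : Projectivization F (Fin d → F)) {p : ℝ} (hp : 1 ≤ p) :
    ∑ Q : Projectivization F (F × (Fin d → F)), ∑ z : F × F,
      |((univ.filter fun w => linP Q w = z.1 ∧ quadP (γ, P) w = z.2).card : ℝ)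
        - (Fintype.card F : ℝ) ^ (d - 1)| ^ p
      = (Fintype.card F : ℝ) ^ 2 * ((Fintype.card F : ℝ) - 1)
        * ((Fintype.card F : ℝ) ^ (d - 1)) ^ p := by
  classical
  have hp0 : p ≠ 0 := by linarith
  have hX : (0:ℝ) ≤ (Fintype.card F : ℝ) ^ (d - 1) := by positivity
  have hzero : ∀ Q ∈ (univ : Finset (Projectivization F (F × (Fin d → F)))),
      Q ∉ univ.image (gmapP P) →
      (∑ z : F × F, |((univ.filter fun w => linP Q w = z.1 ∧ quadP (γ, P) w = z.2).card : ℝ)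
        - (Fintype.card F : ℝ) ^ (d - 1)| ^ p) = 0 := by
    intro Q _ hQ
    have hQ' : ∀ a, gmapP P a ≠ Q := by
      intro a ha
      exact hQ (Finset.mem_image.2 ⟨a, mem_univ a, ha⟩)
    apply Finset.sum_eq_zero
    intro z _
    rw [cross_offdiag hd γ P Q hQ' z.1 z.2]
    rw [show ((Fintype.card F ^ (d-1) : ℕ) : ℝ) - (Fintype.card F : ℝ) ^ (d - 1) = 0 by
      push_cast; ring]
    simp [Real.zero_rpow hp0]
  rw [← Finset.sum_subset (Finset.subset_univ (univ.image (gmapP P))) hzero]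
  rw [Finset.sum_image (fun a _ b _ h => gmapP_inj P h)]
  have hinner : ∀ a : F,
      (∑ z : F × F,
        |((univ.filter fun w => linP (gmapP P a) w = z.1 ∧ quadP (γ, P) w = z.2).card : ℝ)
          - (Fintype.card F : ℝ) ^ (d - 1)| ^ p)
      = (Fintype.card F : ℝ) * ((Fintype.card F - f1 (γ - a) : ℕ) : ℝ)
          * ((Fintype.card F : ℝ) ^ (d - 1)) ^ p := by
    intro a
    obtain ⟨u, hu, hcnt⟩ := cross_diag hd γ P a
    have hstep : ∀ z : F × F,
        |((univ.filter fun w => linP (gmapP P a) w = z.1 ∧ quadP (γ, P) w = z.2).card : ℝ)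
          - (Fintype.card F : ℝ) ^ (d - 1)| ^ p
        = |(Fintype.card F : ℝ) ^ (d - 1) * ((rootSet (γ - a) (z.2 - z.1 * u⁻¹)).card : ℝ)
          - (Fintype.card F : ℝ) ^ (d - 1)| ^ p := by
      intro z
      rw [hcnt z.1 z.2]
      push_cast
      rfl
    rw [Finset.sum_congr rfl (fun z _ => hstep z)]
    rw [Fintype.sum_prod_type]
    have hswap : ∀ c1 : F,
        (∑ c2 : F, |(Fintype.card F : ℝ) ^ (d - 1)
            * ((rootSet (γ - a) (c2 - c1 * u⁻¹)).card : ℝ)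
          - (Fintype.card F : ℝ) ^ (d - 1)| ^ p)
        = ((Fintype.card F - f1 (γ - a) : ℕ) : ℝ) * ((Fintype.card F : ℝ) ^ (d - 1)) ^ p := by
      intro c1
      rw [show (∑ c2 : F, |(Fintype.card F : ℝ) ^ (d - 1)
            * ((rootSet (γ - a) (c2 - c1 * u⁻¹)).card : ℝ)
            - (Fintype.card F : ℝ) ^ (d - 1)| ^ p)
          = ∑ e : F, |(Fintype.card F : ℝ) ^ (d - 1) * ((rootSet (γ - a) e).card : ℝ)
            - (Fintype.card F : ℝ) ^ (d - 1)| ^ p from by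
        rw [← Equiv.sum_comp (Equiv.subRight (c1 * u⁻¹))
          (fun e => |(Fintype.card F : ℝ) ^ (d - 1) * ((rootSet (γ - a) e).card : ℝ)
            - (Fintype.card F : ℝ) ^ (d - 1)| ^ p)]
        simp only [Equiv.subRight_apply]]
      exact sum_dev_rootSet (γ - a) hX hp
    rw [Finset.sum_congr rfl (fun c1 _ => hswap c1), Finset.sum_const, card_univ, nsmul_eq_mul]
    ring
  rw [Finset.sum_congr rfl (fun a _ => hinner a)]
  have hsum1 : ∑ a : F, (Fintype.card F - f1 (γ - a))
      = Fintype.card F * Fintype.card F - Fintype.card F := by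
    have hcomp : ∑ a : F, (Fintype.card F - f1 (γ - a))
        = ∑ b : F, (Fintype.card F - f1 b) := by
      rw [← Equiv.sum_comp (Equiv.subLeft γ) (fun b => Fintype.card F - f1 b)]
      simp only [Equiv.subLeft_apply]
    have hadd : ∑ b : F, (Fintype.card F - f1 b) + ∑ b : F, f1 b
        = ∑ b : F, Fintype.card F := by
      rw [← Finset.sum_add_distrib]
      refine Finset.sum_congr rfl fun b _ => ?_
      have := f1_le b
      omega
    rw [sum_f1, Finset.sum_const, card_univ, smul_eq_mul] at hadd
    omega
  have hfin : ∑ a : F, (Fintype.card F : ℝ) * ((Fintype.card F - f1 (γ - a) : ℕ) : ℝ)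
        * ((Fintype.card F : ℝ) ^ (d - 1)) ^ p
      = (Fintype.card F : ℝ)
        * ((Fintype.card F * Fintype.card F - Fintype.card F : ℕ) : ℝ)
        * ((Fintype.card F : ℝ) ^ (d - 1)) ^ p := by
    rw [← Finset.sum_mul, ← Finset.mul_sum, ← Nat.cast_sum, hsum1]
  rw [hfin]
  have h1 : Fintype.card F ≤ Fintype.card F * Fintype.card F :=
    Nat.le_mul_of_pos_left _ Fintype.card_pos
  rw [Nat.cast_sub h1]
  push_cast
  ring


/-! ### Projective-level pair counts -/

lemma proj_LL (hd : 1 ≤ d) {Q Q' : Projectivization F (F × (Fin d → F))} (hne : Q ≠ Q')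
    (c1 c2 : F) :
    (univ.filter fun w => linP Q w = c1 ∧ linP Q' w = c2).card
      = Fintype.card F ^ (d - 1) := by
  simp only [linP]
  have h0' : ¬(Q'.rep.1 = 0 ∧ Q'.rep.2 = 0) :=
    fun h => Projectivization.rep_nonzero Q' (Prod.ext h.1 h.2)
  refine cnt_LL hd h0' ?_ c1 c2
  intro c hc
  refine rep_nonprop (Ne.symm hne) c ?_
  refine Prod.ext ?_ ?_
  · simpa [smul_eq_mul] using hc.1
  · simpa using hc.2

lemma proj_QQ (hd : 1 ≤ d) {z z' : F × Projectivization F (Fin d → F)} (hne : z ≠ z')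
    (c1 c2 : F) :
    (univ.filter fun w => quadP z w = c1 ∧ quadP z' w = c2).card
      = Fintype.card F ^ (d - 1) := by
  obtain ⟨γ, P⟩ := z
  obtain ⟨γ', P'⟩ := z'
  simp only [quadP]
  by_cases hPP : P = P'
  · subst hPP
    have hγ : γ ≠ γ' := fun h => hne (by rw [h])
    exact cnt_QQ_same hd hγ (Projectivization.rep_nonzero P) c1 c2
  · exact cnt_QQ_diff (rep_nonprop (Ne.symm hPP)) (Projectivization.rep_nonzero P') c1 c2

lemma proj_lin1 (Q : Projectivization F (F × (Fin d → F))) (c : F) :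
    (univ.filter fun w => linP Q w = c).card = Fintype.card F ^ d := by
  simp only [linP]
  exact cnt1_lin (fun h => Projectivization.rep_nonzero Q (Prod.ext h.1 h.2)) c

lemma proj_quad1 (hd : 1 ≤ d) (z : F × Projectivization F (Fin d → F)) (c : F) :
    (univ.filter fun w => quadP z w = c).card = Fintype.card F ^ d := by
  simp only [quadP]
  exact cnt1_quad hd (Projectivization.rep_nonzero z.2) c

lemma cross_cases (hd : 1 ≤ d) (γ : F) (P : Projectivization F (Fin d → F))
    (Q : Projectivization F (F × (Fin d → F))) (c1 c2 : F) :
    ∃ r : ℕ, r ≤ 2 ∧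
      (univ.filter fun w => linP Q w = c1 ∧ quadP (γ, P) w = c2).card
        = Fintype.card F ^ (d - 1) * r := by
  by_cases hQ : ∃ a, gmapP P a = Q
  · obtain ⟨a, rfl⟩ := hQ
    obtain ⟨u, hu, hcnt⟩ := cross_diag hd γ P a
    exact ⟨_, rootSet_card_le_two _ _, hcnt c1 c2⟩
  · push_neg at hQ
    exact ⟨1, one_le_two, by rw [cross_offdiag hd γ P Q hQ c1 c2, mul_one]⟩

/-! ### Bridging rowCount -/

lemma strictMono_pair {k : ℕ} {u v : Fin k} (h : u < v) : StrictMono ![u, v] := by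
  intro a b hab
  fin_cases a <;> fin_cases b
  · exact absurd hab (lt_irrefl _)
  · simpa using h
  · exact absurd hab (by decide)
  · exact absurd hab (lt_irrefl _)

lemma sum_cells {s : ℕ} (σ : F ≃ Fin s) (g : F → F → ℝ) :
    ∑ x : Fin 2 → Fin s, g (σ.symm (x 0)) (σ.symm (x 1)) = ∑ z : F × F, g z.1 z.2 := by
  classical
  let E : (F × F) ≃ (Fin 2 → Fin s) :=
    { toFun := fun z => ![σ z.1, σ z.2]
      invFun := fun x => (σ.symm (x 0), σ.symm (x 1))
      left_inv := by intro z; simp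
      right_inv := by
        intro x
        funext r
        fin_cases r <;> simp }
  rw [← Equiv.sum_comp E (fun x => g (σ.symm (x 0)) (σ.symm (x 1)))]
  refine Finset.sum_congr rfl fun z _ => ?_
  show g (σ.symm (![σ z.1, σ z.2] 0)) (σ.symm (![σ z.1, σ z.2] 1)) = g z.1 z.2
  simp

end AK18
section rowbridge
variable {F : Type*} [Fintype F] [DecidableEq F]

lemma AK18.rowCount_eq_filter {N k t s : ℕ} {M : Type*} [Fintype M] [DecidableEq M]
    (e : Fin N ≃ M) (σ : F ≃ Fin s) (cols : Fin k → M → F)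
    (A' : Fin N → Fin k → Fin s) (hA' : ∀ i jj, A' i jj = σ (cols jj (e i)))
    (x : Fin t → Fin s) (j : Fin t → Fin k) :
    rowCount A' x j
      = (Finset.univ.filter fun w : M => ∀ r, cols (j r) w = σ.symm (x r)).card := by
  unfold rowCount
  refine Finset.card_bij' (fun i _ => e i) (fun w _ => e.symm w) ?_ ?_ ?_ ?_
  · intro i hi
    simp only [Finset.mem_filter, Finset.mem_univ, true_and, hA'] at hi ⊢
    intro r
    rw [← hi r, Equiv.symm_apply_apply]
  · intro w hw
    simp only [Finset.mem_filter, Finset.mem_univ, true_and, hA'] at hw ⊢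
    intro r
    rw [Equiv.apply_symm_apply, hw r, Equiv.apply_symm_apply]
  · intro i _; exact e.symm_apply_apply i
  · intro w _; exact e.apply_symm_apply w

end rowbridge

/-- Addelman–Kempthorne half-construction: for a prime power `s`, `ℓ ≥ 2` and
`1 ≤ κ̃ ≤ s(s^{ℓ−1}−1)/(s−1)`, there is an array with `s^ℓ` runs,
`(s^ℓ−1)/(s−1)+κ̃` factors and `s` levels which is an OA of strength one, whose first
`(s^ℓ−1)/(s−1)` columns and whose last `κ̃` columns form OAs of strength two, with
`Tol₂ = s^{ℓ−2}` and `Unb_{p,2} = κ̃s²(s−1)s^{(ℓ−2)p}`. -/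
theorem statement18 {s l κ : ℕ} (hs : IsPrimePow s) (hl : 2 ≤ l) (hκ : 0 < κ)
    (hκ' : κ ≤ s * ((s ^ (l - 1) - 1) / (s - 1))) :
    ∃ A : Fin (s ^ l) → Fin ((s ^ l - 1) / (s - 1) + κ) → Fin s,
      IsOA s 1 A ∧
      IsOA s 2 (fun i (j : Fin ((s ^ l - 1) / (s - 1))) => A i (Fin.castAdd κ j)) ∧
      IsOA s 2 (fun i (j : Fin κ) => A i (Fin.natAdd ((s ^ l - 1) / (s - 1)) j)) ∧
      Tol s 2 A = (s : ℝ) ^ (l - 2) ∧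
      ∀ p : ℝ, 1 ≤ p →
        Unb s p 2 A =
          (κ : ℝ) * (s : ℝ) ^ 2 * ((s : ℝ) - 1) * (s : ℝ) ^ (((l : ℝ) - 2) * p) := by
  classical
  obtain ⟨p0, k0, hpp, hk0, hpk⟩ := hs
  haveI hfact : Fact (Nat.Prime p0) := ⟨Nat.prime_iff.2 hpp⟩
  set F := GaloisField p0 k0 with hFdef
  haveI : Finite F := by
    have hcard := GaloisField.card p0 k0 (by omega)
    exact Nat.finite_of_card_ne_zero (by rw [hcard]; exact pow_ne_zero _ hpp.ne_zero)
  haveI : Fintype F := Fintype.ofFinite F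
  haveI : DecidableEq F := Classical.decEq F
  have hq : Fintype.card F = s := by
    rw [← Nat.card_eq_fintype_card, GaloisField.card p0 k0 (by omega), hpk]
  have hs2 : 2 ≤ s := by rw [← hq]; exact Fintype.one_lt_card
  have hd1 : 1 ≤ l - 1 := by omega
  haveI : Nonempty (Fin (l - 1)) := ⟨⟨0, hd1⟩⟩
  haveI : Finite (Projectivization F (F × (Fin (l - 1) → F))) := Quotient.finite _
  haveI : Fintype (Projectivization F (F × (Fin (l - 1) → F))) := Fintype.ofFinite _
  haveI : Finite (Projectivization F (Fin (l - 1) → F)) := Quotient.finite _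
  haveI : Fintype (Projectivization F (Fin (l - 1) → F)) := Fintype.ofFinite _
  haveI : Nontrivial (Fin (l - 1) → F) :=
    ⟨⟨(0 : Fin (l - 1) → F), (fun _ => 1 : Fin (l - 1) → F),
      fun h => zero_ne_one (α := F) (congrFun h ⟨0, hd1⟩)⟩⟩
  haveI : Nontrivial (F × (Fin (l - 1) → F)) :=
    ⟨⟨((0 : F), (0 : Fin (l - 1) → F)), ((1 : F), (0 : Fin (l - 1) → F)),
      fun h => zero_ne_one (α := F) (congrArg Prod.fst h)⟩⟩
  have hcardW : Fintype.card (F × (Fin (l - 1) → F)) = s ^ l := by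
    rw [AK18.card_W, hq]
    congr 1
    omega
  have hcardV : Fintype.card (Fin (l - 1) → F) = s ^ (l - 1) := by
    rw [Fintype.card_fun, Fintype.card_fin, hq]
  have hsl2 : 2 ≤ s ^ l := le_trans hs2 (Nat.le_self_pow (by omega) s)
  have hPW : Nat.card (Projectivization F (F × (Fin (l - 1) → F))) = (s ^ l - 1) / (s - 1) := by
    have h := AK18.card_proj_mul (F := F) (M := F × (Fin (l - 1) → F))
    rw [hq, hcardW] at h
    exact (Nat.div_eq_of_eq_mul_left (by omega) h.symm).symm
  have hPV : Nat.card (Projectivization F (Fin (l - 1) → F))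
      = (s ^ (l - 1) - 1) / (s - 1) := by
    have h := AK18.card_proj_mul (F := F) (M := (Fin (l - 1) → F))
    rw [hq, hcardV] at h
    exact (Nat.div_eq_of_eq_mul_left (by omega) h.symm).symm
  set m := (s ^ l - 1) / (s - 1) with hmdef
  obtain ⟨σ⟩ : Nonempty (F ≃ Fin s) := ⟨Fintype.equivOfCardEq (by rw [hq, Fintype.card_fin])⟩
  obtain ⟨e⟩ : Nonempty (Fin (s ^ l) ≃ (F × (Fin (l - 1) → F))) :=
    ⟨Fintype.equivOfCardEq (by rw [Fintype.card_fin, hcardW])⟩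
  obtain ⟨eqm⟩ : Nonempty (Fin m ≃ Projectivization F (F × (Fin (l - 1) → F))) :=
    ⟨Fintype.equivOfCardEq (by rw [Fintype.card_fin, ← Nat.card_eq_fintype_card, hPW])⟩
  obtain ⟨ε⟩ : Nonempty (Fin κ ↪ F × Projectivization F (Fin (l - 1) → F)) := by
    apply Function.Embedding.nonempty_of_card_le
    rw [Fintype.card_fin, Fintype.card_prod, hq, ← Nat.card_eq_fintype_card, hPV]
    exact hκ'
  set cols : Fin (m + κ) → (F × (Fin (l - 1) → F)) → F :=
    Fin.addCases (fun jL => AK18.linP (eqm jL)) (fun jR => AK18.quadP (ε jR)) with hcolsdef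
  have hcolL : ∀ jL : Fin m, cols (Fin.castAdd κ jL) = AK18.linP (eqm jL) := by
    intro jL
    rw [hcolsdef]
    exact Fin.addCases_left jL
  have hcolR : ∀ jR : Fin κ, cols (Fin.natAdd m jR) = AK18.quadP (ε jR) := by
    intro jR
    rw [hcolsdef]
    exact Fin.addCases_right jR
  set A : Fin (s ^ l) → Fin (m + κ) → Fin s := fun i jj => σ (cols jj (e i)) with hAdef
  have hA' : ∀ i jj, A i jj = σ (cols jj (e i)) := fun i jj => rfl
  have hs0 : (0:ℝ) < (s:ℝ) := by exact_mod_cast (by omega : 0 < s)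
  have hE2 : ((s ^ l : ℕ) : ℝ) / (s:ℝ) ^ 2 = ((s ^ (l - 2) : ℕ) : ℝ) := by
    rw [div_eq_iff (by positivity)]
    push_cast
    rw [← pow_add]
    congr 1
    omega
  have hE1 : ((s ^ l : ℕ) : ℝ) / (s:ℝ) ^ 1 = ((s ^ (l - 1) : ℕ) : ℝ) := by
    rw [div_eq_iff (by positivity)]
    push_cast
    rw [← pow_add]
    congr 1
    omega
  have hll : l - 1 - 1 = l - 2 := by omega
  -- strength-one count for every column
  have hS1 : ∀ (jj : Fin (m + κ)) (c : F),
      (Finset.univ.filter fun w => cols jj w = c).card = s ^ (l - 1) := by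
    intro jj c
    rcases lt_or_ge (jj : ℕ) m with h | h
    · obtain ⟨jL, hjj⟩ : ∃ jL : Fin m, jj = Fin.castAdd κ jL :=
        ⟨⟨(jj : ℕ), h⟩, Fin.ext rfl⟩
      simp only [hjj, hcolL]
      rw [← hq]
      exact AK18.proj_lin1 (eqm jL) c
    · obtain ⟨jR, hjj⟩ : ∃ jR : Fin κ, jj = Fin.natAdd m jR :=
        ⟨⟨(jj : ℕ) - m, by have := jj.isLt; omega⟩,
          Fin.ext (by simp only [Fin.coe_natAdd, Fin.val_mk]; omega)⟩
      simp only [hjj, hcolR]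
      rw [show s ^ (l - 1) = Fintype.card F ^ (l - 1) by rw [hq]]
      exact AK18.proj_quad1 hd1 _ c
  -- two-column bridge
  have hrow2 : ∀ (x : Fin 2 → Fin s) (j : Fin 2 → Fin (m + κ)),
      rowCount A x j
        = (Finset.univ.filter fun w => cols (j 0) w = σ.symm (x 0)
            ∧ cols (j 1) w = σ.symm (x 1)).card := by
    intro x j
    rw [AK18.rowCount_eq_filter e σ cols A hA' x j]
    refine congrArg Finset.card ?_
    ext w
    simp [Fin.forall_fin_two]
  -- classification of strictly monotone pairs of columns
  have hPAIR : ∀ (j : Fin 2 → Fin (m + κ)), StrictMono j →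
      (∀ c1 c2 : F, (Finset.univ.filter fun w => cols (j 0) w = c1 ∧ cols (j 1) w = c2).card
        = s ^ (l - 2))
      ∨ (∃ (jL : Fin m) (jR : Fin κ), j 0 = Fin.castAdd κ jL ∧ j 1 = Fin.natAdd m jR) := by
    intro j hj
    have hlt : j 0 < j 1 := hj (by decide)
    have hltv : ((j 0 : ℕ)) < ((j 1 : ℕ)) := hlt
    rcases lt_or_ge ((j 0 : ℕ)) m with h0 | h0 <;> rcases lt_or_ge ((j 1 : ℕ)) m with h1 | h1
    · left
      intro c1 c2
      obtain ⟨jL0, hj0⟩ : ∃ jL0 : Fin m, j 0 = Fin.castAdd κ jL0 :=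
        ⟨⟨(j 0 : ℕ), h0⟩, Fin.ext rfl⟩
      obtain ⟨jL1, hj1⟩ : ∃ jL1 : Fin m, j 1 = Fin.castAdd κ jL1 :=
        ⟨⟨(j 1 : ℕ), h1⟩, Fin.ext rfl⟩
      have hne : eqm jL0 ≠ eqm jL1 := by
        intro hcontra
        have h2 := eqm.injective hcontra
        apply absurd hltv
        rw [hj0, hj1, h2]
        exact lt_irrefl _
      have hc := AK18.proj_LL (d := l - 1) hd1 hne c1 c2
      rw [hq] at hc
      simp only [hj0, hj1, hcolL]
      exact hc
    · right
      refine ⟨⟨(j 0 : ℕ), h0⟩, ⟨(j 1 : ℕ) - m, by have := (j 1).isLt; omega⟩,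
        Fin.ext rfl, Fin.ext (by simp only [Fin.coe_natAdd, Fin.val_mk]; omega)⟩
    · exfalso; omega
    · left
      intro c1 c2
      obtain ⟨jR0, hj0⟩ : ∃ jR0 : Fin κ, j 0 = Fin.natAdd m jR0 :=
        ⟨⟨(j 0 : ℕ) - m, by have := (j 0).isLt; omega⟩, Fin.ext (by simp only [Fin.coe_natAdd, Fin.val_mk]; omega)⟩
      obtain ⟨jR1, hj1⟩ : ∃ jR1 : Fin κ, j 1 = Fin.natAdd m jR1 :=
        ⟨⟨(j 1 : ℕ) - m, by have := (j 1).isLt; omega⟩, Fin.ext (by simp only [Fin.coe_natAdd, Fin.val_mk]; omega)⟩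
      have hargs : jR0 ≠ jR1 := by
        intro hcon
        apply absurd hltv
        rw [hj0, hj1, hcon]
        exact lt_irrefl _
      have hc := AK18.proj_QQ (d := l - 1) hd1 (ε.injective.ne hargs) c1 c2
      rw [hq] at hc
      simp only [hj0, hj1, hcolR]
      exact hc
  -- deviations take only the values 0 and s^(l-2)
  have hM1 : ∀ (x : Fin 2 → Fin s) (j : Fin 2 → Fin (m + κ)), StrictMono j →
      |(rowCount A x j : ℝ) - ((s ^ l : ℕ) : ℝ) / (s:ℝ) ^ 2| = 0
      ∨ |(rowCount A x j : ℝ) - ((s ^ l : ℕ) : ℝ) / (s:ℝ) ^ 2| = ((s ^ (l - 2) : ℕ) : ℝ) := by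
    intro x j hj
    rw [hrow2 x j]
    rcases hPAIR j hj with h | ⟨jL, jR, hj0, hj1⟩
    · left
      rw [h (σ.symm (x 0)) (σ.symm (x 1)), hE2]
      simp
    · simp only [hj0, hj1, hcolL, hcolR]
      obtain ⟨r, hr2, hcnt⟩ := AK18.cross_cases (d := l - 1) hd1 (ε jR).1 (ε jR).2 (eqm jL)
        (σ.symm (x 0)) (σ.symm (x 1))
      simp only [Prod.mk.eta] at hcnt
      rw [hcnt, hE2]
      rw [show Fintype.card F ^ (l - 1 - 1) = s ^ (l - 2) by rw [hq, hll]]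
      interval_cases r
      · right
        rw [mul_zero, Nat.cast_zero, zero_sub, abs_neg, abs_of_nonneg (by positivity)]
      · left
        rw [mul_one, sub_self, abs_zero]
      · right
        rw [show ((s ^ (l - 2) * 2 : ℕ) : ℝ) - ((s ^ (l - 2) : ℕ) : ℝ)
            = ((s ^ (l - 2) : ℕ) : ℝ) by push_cast; ring]
        rw [abs_of_nonneg (by positivity)]
  -- the unbalance computation
  have hUnbAux : ∀ p : ℝ, 1 ≤ p →
      Unb s p 2 A = (κ:ℝ) * (s:ℝ) ^ 2 * ((s:ℝ) - 1) * (((s:ℝ) ^ (l - 2)) ^ p) := by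
    intro p hp
    have hp0 : p ≠ 0 := by linarith
    show (∑ x : Fin 2 → Fin s,
        ∑ j ∈ Finset.univ.filter (fun j : Fin 2 → Fin (m + κ) => StrictMono j),
        |(rowCount A x j : ℝ) - ((s ^ l : ℕ) : ℝ) / (s:ℝ) ^ 2| ^ p) = _
    rw [Finset.sum_comm]
    rw [← Finset.sum_filter_add_sum_filter_not
      (Finset.univ.filter (fun j : Fin 2 → Fin (m + κ) => StrictMono j))
      (fun j => (j 0 : ℕ) < m ∧ m ≤ (j 1 : ℕ))]
    have hzero2 : ∑ j ∈ (Finset.univ.filter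
        (fun j : Fin 2 → Fin (m + κ) => StrictMono j)).filter
        (fun j => ¬((j 0 : ℕ) < m ∧ m ≤ (j 1 : ℕ))),
        (∑ x : Fin 2 → Fin s,
          |(rowCount A x j : ℝ) - ((s ^ l : ℕ) : ℝ) / (s:ℝ) ^ 2| ^ p) = 0 := by
      apply Finset.sum_eq_zero
      intro j hjmem
      simp only [Finset.mem_filter, Finset.mem_univ, true_and] at hjmem
      obtain ⟨hjSM, hjnc⟩ := hjmem
      rcases hPAIR j hjSM with h | ⟨jL, jR, hj0, hj1⟩
      · apply Finset.sum_eq_zero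
        intro x _
        rw [hrow2 x j, h (σ.symm (x 0)) (σ.symm (x 1)), hE2]
        simp [Real.zero_rpow hp0]
      · exfalso
        apply hjnc
        constructor
        · rw [hj0]; simpa using jL.isLt
        · rw [hj1]; simp
    rw [hzero2, add_zero]
    have hbij : ∑ j ∈ (Finset.univ.filter
        (fun j : Fin 2 → Fin (m + κ) => StrictMono j)).filter
        (fun j => (j 0 : ℕ) < m ∧ m ≤ (j 1 : ℕ)),
        (∑ x : Fin 2 → Fin s,
          |(rowCount A x j : ℝ) - ((s ^ l : ℕ) : ℝ) / (s:ℝ) ^ 2| ^ p)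
      = ∑ z : Fin m × Fin κ,
        (∑ x : Fin 2 → Fin s,
          |(rowCount A x ![Fin.castAdd κ z.1, Fin.natAdd m z.2] : ℝ)
            - ((s ^ l : ℕ) : ℝ) / (s:ℝ) ^ 2| ^ p) := by
      refine (Finset.sum_bij' (i := fun (z : Fin m × Fin κ) _ =>
          ![Fin.castAdd κ z.1, Fin.natAdd m z.2])
        (j := fun j hjm => ((⟨(j 0 : ℕ), ((Finset.mem_filter.1 hjm).2).1⟩ : Fin m),
          (⟨(j 1 : ℕ) - m, by
            have h1 := (j 1).isLt
            have h2 := ((Finset.mem_filter.1 hjm).2).2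
            omega⟩ : Fin κ)))
        ?_ ?_ ?_ ?_ ?_).symm
      · intro z _
        rw [Finset.mem_filter]
        refine ⟨Finset.mem_filter.2 ⟨Finset.mem_univ _, ?_⟩, ?_, ?_⟩
        · apply AK18.strictMono_pair
          rw [Fin.lt_def]
          simp
          omega
        · simp
        · simp
      · intro j _
        exact Finset.mem_univ _
      · intro z _
        refine Prod.ext ?_ ?_ <;> apply Fin.ext <;> simp
      · intro j hjm
        have h2 := ((Finset.mem_filter.1 hjm).2).2
        funext r
        fin_cases r <;> apply Fin.ext <;> simp <;> omega
      · intro z _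
        rfl
    rw [hbij, Fintype.sum_prod_type, Finset.sum_comm]
    have hcell : ∀ (jL : Fin m) (jR : Fin κ),
        (∑ x : Fin 2 → Fin s,
          |(rowCount A x ![Fin.castAdd κ jL, Fin.natAdd m jR] : ℝ)
            - ((s ^ l : ℕ) : ℝ) / (s:ℝ) ^ 2| ^ p)
        = ∑ z : F × F, |((Finset.univ.filter fun w => AK18.linP (eqm jL) w = z.1
            ∧ AK18.quadP (ε jR) w = z.2).card : ℝ)
          - (Fintype.card F : ℝ) ^ (l - 1 - 1)| ^ p := by
      intro jL jR
      rw [← AK18.sum_cells σ (fun c1 c2 =>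
        |((Finset.univ.filter fun w => AK18.linP (eqm jL) w = c1
            ∧ AK18.quadP (ε jR) w = c2).card : ℝ)
          - (Fintype.card F : ℝ) ^ (l - 1 - 1)| ^ p)]
      refine Finset.sum_congr rfl fun x _ => ?_
      rw [hrow2]
      rw [show (![Fin.castAdd κ jL, Fin.natAdd m jR] : Fin 2 → Fin (m + κ)) 0
          = Fin.castAdd κ jL from rfl,
        show (![Fin.castAdd κ jL, Fin.natAdd m jR] : Fin 2 → Fin (m + κ)) 1
          = Fin.natAdd m jR from rfl, hcolL, hcolR, hE2, hq]
      push_cast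
      rfl
    rw [Finset.sum_congr rfl (fun jR _ => Finset.sum_congr rfl (fun jL _ => hcell jL jR))]
    have hcol : ∀ jR : Fin κ,
        (∑ jL : Fin m, ∑ z : F × F,
          |((Finset.univ.filter fun w => AK18.linP (eqm jL) w = z.1
              ∧ AK18.quadP (ε jR) w = z.2).card : ℝ)
            - (Fintype.card F : ℝ) ^ (l - 1 - 1)| ^ p)
        = (s:ℝ) ^ 2 * ((s:ℝ) - 1) * (((s:ℝ) ^ (l - 2)) ^ p) := by
      intro jR
      have hps := AK18.percol_sum (d := l - 1) hd1 (ε jR).1 (ε jR).2 hp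
      simp only [Prod.mk.eta] at hps
      calc (∑ jL : Fin m, ∑ z : F × F,
          |((Finset.univ.filter fun w => AK18.linP (eqm jL) w = z.1
              ∧ AK18.quadP (ε jR) w = z.2).card : ℝ)
            - (Fintype.card F : ℝ) ^ (l - 1 - 1)| ^ p)
          = ∑ Q : Projectivization F (F × (Fin (l - 1) → F)), ∑ z : F × F,
            |((Finset.univ.filter fun w => AK18.linP Q w = z.1
                ∧ AK18.quadP (ε jR) w = z.2).card : ℝ)
              - (Fintype.card F : ℝ) ^ (l - 1 - 1)| ^ p :=
            Equiv.sum_comp eqm (fun Q => ∑ z : F × F,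
              |((Finset.univ.filter fun w => AK18.linP Q w = z.1
                  ∧ AK18.quadP (ε jR) w = z.2).card : ℝ)
                - (Fintype.card F : ℝ) ^ (l - 1 - 1)| ^ p)
        _ = (Fintype.card F : ℝ) ^ 2 * ((Fintype.card F : ℝ) - 1)
            * ((Fintype.card F : ℝ) ^ (l - 1 - 1)) ^ p := hps
        _ = (s:ℝ) ^ 2 * ((s:ℝ) - 1) * (((s:ℝ) ^ (l - 2)) ^ p) := by rw [hq, hll]
    rw [Finset.sum_congr rfl (fun jR _ => hcol jR), Finset.sum_const, Finset.card_univ,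
      Fintype.card_fin, nsmul_eq_mul]
    ring
  refine ⟨A, ?_, ?_, ?_, ?_, ?_⟩
  · -- strength one
    intro x j _
    rw [AK18.rowCount_eq_filter e σ cols A hA' x j]
    rw [show (Finset.univ.filter fun w => ∀ r : Fin 1, cols (j r) w = σ.symm (x r))
        = Finset.univ.filter fun w => cols (j 0) w = σ.symm (x 0) from by
      refine Finset.filter_congr fun w _ => ?_
      rw [Fin.forall_fin_one]]
    rw [hS1 (j 0) (σ.symm (x 0))]
    rw [pow_one] at hE1 ⊢
    exact hE1.symm
  · -- first block strength two
    intro x j hj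
    rw [AK18.rowCount_eq_filter e σ (fun jj => cols (Fin.castAdd κ jj))
      (fun i jj => A i (Fin.castAdd κ jj)) (fun i jj => hA' i (Fin.castAdd κ jj)) x j]
    rw [show (Finset.univ.filter fun w => ∀ r : Fin 2, cols (Fin.castAdd κ (j r)) w = σ.symm (x r))
        = Finset.univ.filter fun w => AK18.linP (eqm (j 0)) w = σ.symm (x 0)
            ∧ AK18.linP (eqm (j 1)) w = σ.symm (x 1) from by
      refine Finset.filter_congr fun w _ => ?_
      rw [Fin.forall_fin_two, hcolL, hcolL]]
    have hne : eqm (j 0) ≠ eqm (j 1) :=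
      fun hcontra => absurd (eqm.injective hcontra) (ne_of_lt (hj (by decide)))
    rw [AK18.proj_LL hd1 hne (σ.symm (x 0)) (σ.symm (x 1)), hq]
    exact hE2.symm
  · -- second block strength two
    intro x j hj
    rw [AK18.rowCount_eq_filter e σ (fun jj => cols (Fin.natAdd m jj))
      (fun i jj => A i (Fin.natAdd m jj)) (fun i jj => hA' i (Fin.natAdd m jj)) x j]
    rw [show (Finset.univ.filter fun w => ∀ r : Fin 2, cols (Fin.natAdd m (j r)) w = σ.symm (x r))
        = Finset.univ.filter fun w => AK18.quadP (ε (j 0)) w = σ.symm (x 0)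
            ∧ AK18.quadP (ε (j 1)) w = σ.symm (x 1) from by
      refine Finset.filter_congr fun w _ => ?_
      rw [Fin.forall_fin_two, hcolR, hcolR]]
    have hne : ε (j 0) ≠ ε (j 1) := ε.injective.ne (ne_of_lt (hj (by decide)))
    rw [AK18.proj_QQ hd1 hne (σ.symm (x 0)) (σ.symm (x 1)), hq]
    exact hE2.symm
  · -- tolerance
    haveI hNE1 : Nonempty (Fin 2 → Fin s) := ⟨fun _ => ⟨0, by omega⟩⟩
    have hU1 := hUnbAux 1 le_rfl
    have hpos : (0:ℝ) < (κ:ℝ) * (s:ℝ) ^ 2 * ((s:ℝ) - 1) * (((s:ℝ) ^ (l - 2)) ^ (1:ℝ)) := by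
      have h2 : (2:ℝ) ≤ (s:ℝ) := by exact_mod_cast hs2
      have hκ0 : (0:ℝ) < (κ:ℝ) := by exact_mod_cast hκ
      have h3 : (0:ℝ) < ((s:ℝ) ^ (l - 2)) ^ (1:ℝ) := Real.rpow_pos_of_pos (by positivity) 1
      apply mul_pos (mul_pos (mul_pos hκ0 (by positivity)) (by linarith)) h3
    have hUnz : Unb s 1 2 A ≠ 0 := by rw [hU1]; exact ne_of_gt hpos
    have hexists : ∃ (x : Fin 2 → Fin s) (j : Fin 2 → Fin (m + κ)), StrictMono j ∧
        |(rowCount A x j : ℝ) - ((s ^ l : ℕ) : ℝ) / (s:ℝ) ^ 2| = ((s ^ (l - 2) : ℕ) : ℝ) := by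
      by_contra hcon
      push_neg at hcon
      apply hUnz
      show (∑ x : Fin 2 → Fin s,
          ∑ j ∈ Finset.univ.filter (fun j : Fin 2 → Fin (m + κ) => StrictMono j),
          |(rowCount A x j : ℝ) - ((s ^ l : ℕ) : ℝ) / (s:ℝ) ^ 2| ^ (1:ℝ)) = 0
      apply Finset.sum_eq_zero
      intro x _
      apply Finset.sum_eq_zero
      intro j hjm
      simp only [Finset.mem_filter, Finset.mem_univ, true_and] at hjm
      rcases hM1 x j hjm with h | h
      · rw [h]
        exact Real.zero_rpow one_ne_zero
      · exact absurd h (hcon x j hjm)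
    obtain ⟨x0, j0, hj0SM, hdev⟩ := hexists
    haveI hNE2 : Nonempty {j : Fin 2 → Fin (m + κ) // StrictMono j} := ⟨⟨j0, hj0SM⟩⟩
    apply le_antisymm
    · refine ciSup_le fun x => ?_
      refine ciSup_le fun jsub => ?_
      rcases hM1 x jsub.1 jsub.2 with h | h <;> rw [h]
      · positivity
      · push_cast
        exact le_refl _
    · have hb1 : BddAbove (Set.range fun jsub : {j : Fin 2 → Fin (m + κ) // StrictMono j} =>
          |(rowCount A x0 jsub.1 : ℝ) - ((s ^ l : ℕ) : ℝ) / (s:ℝ) ^ 2|) :=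
        Set.Finite.bddAbove (Set.finite_range _)
      have hb2 : BddAbove (Set.range fun x : Fin 2 → Fin s =>
          ⨆ jsub : {j : Fin 2 → Fin (m + κ) // StrictMono j},
            |(rowCount A x jsub.1 : ℝ) - ((s ^ l : ℕ) : ℝ) / (s:ℝ) ^ 2|) :=
        Set.Finite.bddAbove (Set.finite_range _)
      calc (s:ℝ) ^ (l - 2)
          = |(rowCount A x0 j0 : ℝ) - ((s ^ l : ℕ) : ℝ) / (s:ℝ) ^ 2| := by
            rw [hdev]; push_cast; rfl
        _ ≤ ⨆ jsub : {j : Fin 2 → Fin (m + κ) // StrictMono j},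
              |(rowCount A x0 jsub.1 : ℝ) - ((s ^ l : ℕ) : ℝ) / (s:ℝ) ^ 2| :=
            le_ciSup hb1 ⟨j0, hj0SM⟩
        _ ≤ _ := le_ciSup hb2 x0
  · -- unbalance
    intro p hp
    rw [hUnbAux p hp]
    have hcast : (s:ℝ) ^ (((l:ℝ) - 2) * p) = ((s:ℝ) ^ (l - 2)) ^ p := by
      rw [show ((l:ℝ) - 2) = ((l - 2 : ℕ) : ℝ) from by push_cast [Nat.cast_sub hl]; ring]
      rw [← Real.rpow_natCast (s:ℝ) (l - 2), ← Real.rpow_mul hs0.le]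
    rw [hcast]
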